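/- Let n ≥ 1, let ρ ∈ [−1, 1], and let A ⊆ {−1, 1}^n with |A| = α · 2^n for some α ∈ [0, 1]. Sample x uniformly from {−1, 1}^n and then sample y ~ N_ρ(x). Then Pr[x ∈ A and y ∈ A] ≤ α^{2/(1+|ρ|)}. -/

import Mathlib

open Real

-- Lemma A
lemma lemA {θ t : ℝ} (hθ : θ ≤ 1) (ht0 : 0 < t) (ht1 : t < 1) :
    2 ≤ (1+t) ^ (θ-1) + (1-t) ^ (θ-1) := by
  have ha : (0:ℝ) < 1 + t := by linarith
  have hb : (0:ℝ) < 1 - t := by linarith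
  have hab : (1+t) * (1-t) ≤ 1 := by nlinarith
  have h1 : (1:ℝ) ≤ ((1+t) * (1-t)) ^ (θ-1) :=
    Real.one_le_rpow_of_pos_of_le_one_of_nonpos (by positivity) hab (by linarith)
  rw [Real.mul_rpow ha.le hb.le] at h1
  have hx := Real.rpow_nonneg ha.le (θ-1)
  have hy := Real.rpow_nonneg hb.le (θ-1)
  nlinarith [sq_nonneg ((1+t) ^ (θ-1) - (1-t) ^ (θ-1))]

-- Lemma B
lemma lemB {θ : ℝ} (hθ0 : 0 ≤ θ) (hθ1 : θ ≤ 1) {t : ℝ} (ht0 : 0 ≤ t) (ht1 : t ≤ 1) :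
    2*θ*t ≤ (1+t) ^ θ - (1-t) ^ θ := by
  set F : ℝ → ℝ := fun t => (1+t) ^ θ - (1-t) ^ θ - 2*θ*t with hF
  rcases eq_or_lt_of_le hθ0 with h | hθpos
  · simp [← h]
  have hmono : MonotoneOn F (Set.Icc 0 1) := by
    apply monotoneOn_of_deriv_nonneg (convex_Icc 0 1)
    · apply ContinuousOn.sub
      apply ContinuousOn.sub
      · exact ((continuous_const.add continuous_id).rpow_const
          (fun x => Or.inr hθ0)).continuousOn
      · exact ((continuous_const.sub continuous_id).rpow_const
          (fun x => Or.inr hθ0)).continuousOn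
      · exact (continuous_const.mul continuous_id).continuousOn
    · intro x hx
      rw [interior_Icc] at hx
      have h1 : (0:ℝ) < 1 + x := by linarith [hx.1]
      have h2 : (0:ℝ) < 1 - x := by linarith [hx.2]
      have d1 : HasDerivAt (fun t : ℝ => (1+t) ^ θ) (1 * θ * (1+x) ^ (θ-1)) x :=
        (HasDerivAt.rpow_const ((hasDerivAt_id x).const_add 1) (Or.inl h1.ne'))
      have d2 : HasDerivAt (fun t : ℝ => (1-t) ^ θ) ((-1) * θ * (1-x) ^ (θ-1)) x :=
        (HasDerivAt.rpow_const ((hasDerivAt_id x).const_sub 1) (Or.inl h2.ne'))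
      exact ((d1.sub d2).sub ((hasDerivAt_id x).const_mul (2*θ))).differentiableAt.differentiableWithinAt
    · intro x hx
      rw [interior_Icc] at hx
      have h1 : (0:ℝ) < 1 + x := by linarith [hx.1]
      have h2 : (0:ℝ) < 1 - x := by linarith [hx.2]
      have d1 : HasDerivAt (fun t : ℝ => (1+t) ^ θ) (1 * θ * (1+x) ^ (θ-1)) x :=
        (HasDerivAt.rpow_const ((hasDerivAt_id x).const_add 1) (Or.inl h1.ne'))
      have d2 : HasDerivAt (fun t : ℝ => (1-t) ^ θ) ((-1) * θ * (1-x) ^ (θ-1)) x :=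
        (HasDerivAt.rpow_const ((hasDerivAt_id x).const_sub 1) (Or.inl h2.ne'))
      have dF : HasDerivAt F (1 * θ * (1+x) ^ (θ-1) - (-1) * θ * (1-x) ^ (θ-1) - 2*θ*1) x :=
        (d1.sub d2).sub ((hasDerivAt_id x).const_mul (2*θ))
      rw [dF.deriv]
      have := lemA hθ1 hx.1 hx.2
      nlinarith
  have h0 : F 0 = 0 := by simp [hF]
  have := hmono (Set.mem_Icc.mpr ⟨le_refl 0, zero_le_one⟩) (Set.mem_Icc.mpr ⟨ht0, ht1⟩) ht0
  rw [h0] at this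
  simpa [hF, sub_nonneg] using (by linarith [this] : 0 ≤ F t)

-- KEY
lemma lemKEY {p : ℝ} (hp1 : 1 ≤ p) (hp2 : p ≤ 2) {s : ℝ} (hs0 : 0 ≤ s) (hs1 : s ≤ 1) :
    2 + p*(p-1)*s^2 ≤ (1+s) ^ p + (1-s) ^ p := by
  set G : ℝ → ℝ := fun t => (1+t) ^ p + (1-t) ^ p - 2 - p*(p-1)*t^2 with hG
  have hmono : MonotoneOn G (Set.Icc 0 1) := by
    apply monotoneOn_of_deriv_nonneg (convex_Icc 0 1)
    · apply ContinuousOn.sub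
      apply ContinuousOn.sub
      apply ContinuousOn.add
      · exact ((continuous_const.add continuous_id).rpow_const
          (fun x => Or.inr (by linarith))).continuousOn
      · exact ((continuous_const.sub continuous_id).rpow_const
          (fun x => Or.inr (by linarith))).continuousOn
      · exact continuousOn_const
      · exact (continuous_const.mul (continuous_pow 2)).continuousOn
    · intro x hx
      rw [interior_Icc] at hx
      have h1 : (0:ℝ) < 1 + x := by linarith [hx.1]
      have h2 : (0:ℝ) < 1 - x := by linarith [hx.2]
      have d1 : HasDerivAt (fun t : ℝ => (1+t) ^ p) (1 * p * (1+x) ^ (p-1)) x :=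
        (HasDerivAt.rpow_const ((hasDerivAt_id x).const_add 1) (Or.inl h1.ne'))
      have d2 : HasDerivAt (fun t : ℝ => (1-t) ^ p) ((-1) * p * (1-x) ^ (p-1)) x :=
        (HasDerivAt.rpow_const ((hasDerivAt_id x).const_sub 1) (Or.inl h2.ne'))
      have d4 : HasDerivAt (fun t : ℝ => p*(p-1)*t^2) (p*(p-1)*(2*x)) x := by
        simpa using (hasDerivAt_pow 2 x).const_mul (p*(p-1))
      exact (((d1.add d2).sub_const 2).sub d4).differentiableAt.differentiableWithinAt
    · intro x hx
      rw [interior_Icc] at hx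
      have h1 : (0:ℝ) < 1 + x := by linarith [hx.1]
      have h2 : (0:ℝ) < 1 - x := by linarith [hx.2]
      have d1 : HasDerivAt (fun t : ℝ => (1+t) ^ p) (1 * p * (1+x) ^ (p-1)) x :=
        (HasDerivAt.rpow_const ((hasDerivAt_id x).const_add 1) (Or.inl h1.ne'))
      have d2 : HasDerivAt (fun t : ℝ => (1-t) ^ p) ((-1) * p * (1-x) ^ (p-1)) x :=
        (HasDerivAt.rpow_const ((hasDerivAt_id x).const_sub 1) (Or.inl h2.ne'))
      have d4 : HasDerivAt (fun t : ℝ => p*(p-1)*t^2) (p*(p-1)*(2*x)) x := by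
        simpa using (hasDerivAt_pow 2 x).const_mul (p*(p-1))
      have dG : HasDerivAt G (1 * p * (1+x) ^ (p-1) + (-1) * p * (1-x) ^ (p-1) - p*(p-1)*(2*x)) x :=
        ((d1.add d2).sub_const 2).sub d4
      rw [dG.deriv]
      have hB := lemB (by linarith : (0:ℝ) ≤ p - 1) (by linarith) hx.1.le hx.2.le
      have hp0 : 0 < p := by linarith
      nlinarith [hB]
  have h0 : G 0 = 0 := by norm_num [hG]
  have := hmono (Set.mem_Icc.mpr ⟨le_refl 0, zero_le_one⟩) (Set.mem_Icc.mpr ⟨hs0, hs1⟩) hs0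
  rw [h0] at this
  simp only [hG] at this
  linarith

-- Phi lower bound by sqrt
lemma lemPhi {p : ℝ} (hp1 : 1 ≤ p) (hp2 : p ≤ 2) {s : ℝ} (hs : |s| ≤ 1) :
    Real.sqrt (1 + (p-1)*s^2) ≤ (((1+s) ^ p + (1-s) ^ p)/2) ^ (1/p) := by
  have hp0 : (0:ℝ) < p := by linarith
  -- reduce to s ∈ [0,1]
  have main : ∀ t : ℝ, 0 ≤ t → t ≤ 1 →
      Real.sqrt (1 + (p-1)*t^2) ≤ (((1+t) ^ p + (1-t) ^ p)/2) ^ (1/p) := by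
    intro t ht0 ht1
    have hkey := lemKEY hp1 hp2 ht0 ht1
    have hb : (1 + (p-1)*t^2) ^ (p/2) ≤ 1 + (p/2) * ((p-1)*t^2) := by
      have := rpow_one_add_le_one_add_mul_self
        (s := (p-1)*t^2) (by nlinarith) (p := p/2) (by linarith) (by linarith)
      exact this
    have h1 : (1 + (p-1)*t^2) ^ (p/2) ≤ ((1+t) ^ p + (1-t) ^ p)/2 := by
      nlinarith
    have h2 : ((1 + (p-1)*t^2) ^ (p/2)) ^ (1/p) ≤ (((1+t) ^ p + (1-t) ^ p)/2) ^ (1/p) :=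
      Real.rpow_le_rpow (Real.rpow_nonneg (by nlinarith) _) h1 (by positivity)
    have h3 : ((1 + (p-1)*t^2) ^ (p/2)) ^ (1/p) = Real.sqrt (1 + (p-1)*t^2) := by
      rw [← Real.rpow_mul (by nlinarith)]
      rw [show p/2 * (1/p) = 1/2 by field_simp]
      rw [← Real.sqrt_eq_rpow]
    rwa [h3] at h2
  rcases le_or_gt 0 s with h | h
  · exact main s h (abs_le.mp hs).2
  · have h := main (-s) (by linarith) (by linarith [(abs_le.mp hs).1])
    rw [show (1:ℝ) + -s = 1 - s by ring, show (1:ℝ) - -s = 1 + s by ring,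
      show (p-1)*(-s)^2 = (p-1)*s^2 by ring, add_comm ((1-s)^p)] at h
    exact h

-- core product inequality
lemma lemCore {p : ℝ} (hp1 : 1 ≤ p) (hp2 : p ≤ 2) {s r : ℝ} (hs1 : |s| ≤ 1) (hr1 : |r| ≤ 1) :
    1 + (p-1) * s * r ≤ (((1+s) ^ p + (1-s) ^ p)/2) ^ (1/p) * (((1+r) ^ p + (1-r) ^ p)/2) ^ (1/p) := by
  have hρ' : (0:ℝ) ≤ p - 1 := by linarith
  have hPhiS := lemPhi hp1 hp2 hs1
  have hPhiR := lemPhi hp1 hp2 hr1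
  have hsq : Real.sqrt (1 + (p-1)*s^2) * Real.sqrt (1 + (p-1)*r^2)
      = Real.sqrt ((1 + (p-1)*s^2) * (1 + (p-1)*r^2)) := by
    rw [← Real.sqrt_mul (by nlinarith)]
  have hstep : 1 + (p-1) * s * r ≤ Real.sqrt ((1 + (p-1)*s^2) * (1 + (p-1)*r^2)) := by
    rcases le_or_gt (1 + (p-1) * s * r) 0 with hneg | hpos
    · exact hneg.trans (Real.sqrt_nonneg _)
    · rw [Real.le_sqrt hpos.le]
      · nlinarith [mul_nonneg hρ' (sq_nonneg (s - r))]
      · nlinarith [mul_nonneg hρ' (sq_nonneg s), mul_nonneg hρ' (sq_nonneg r),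
          mul_nonneg (mul_nonneg hρ' (sq_nonneg s)) (mul_nonneg hρ' (sq_nonneg r))]
  calc 1 + (p-1) * s * r ≤ Real.sqrt (1 + (p-1)*s^2) * Real.sqrt (1 + (p-1)*r^2) := by
        rw [hsq]; exact hstep
    _ ≤ (((1+s) ^ p + (1-s) ^ p)/2) ^ (1/p) * (((1+r) ^ p + (1-r) ^ p)/2) ^ (1/p) := by
        apply mul_le_mul hPhiS hPhiR (Real.sqrt_nonneg _)
        exact le_trans (Real.sqrt_nonneg _) hPhiS

-- one-bit two-function inequality
lemma lemL1 {ρ : ℝ} (h0 : 0 ≤ ρ) (h1 : ρ ≤ 1) {u0 u1 v0 v1 : ℝ}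
    (hu0 : 0 ≤ u0) (hu1 : 0 ≤ u1) (hv0 : 0 ≤ v0) (hv1 : 0 ≤ v1) :
    (1+ρ)/2*(u0*v0+u1*v1) + (1-ρ)/2*(u0*v1+u1*v0)
      ≤ 2 * (((u0 ^ (1+ρ) + u1 ^ (1+ρ))/2) ^ (1/(1+ρ)))
          * (((v0 ^ (1+ρ) + v1 ^ (1+ρ))/2) ^ (1/(1+ρ))) := by
  set p := 1 + ρ with hp
  have hp1 : 1 ≤ p := by linarith
  have hp2 : p ≤ 2 := by linarith
  have hp0 : (0:ℝ) < p := by linarith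
  rcases eq_or_lt_of_le (by positivity : (0:ℝ) ≤ u0 + u1) with hu | hu
  · have e0 : u0 = 0 := by linarith
    have e1 : u1 = 0 := by linarith
    rw [e0, e1]
    have : (0:ℝ) ≤ 2 * (((0:ℝ) ^ p + (0:ℝ) ^ p)/2) ^ (1/p) * (((v0 ^ p + v1 ^ p)/2) ^ (1/p)) := by
      positivity
    simpa using this
  rcases eq_or_lt_of_le (by positivity : (0:ℝ) ≤ v0 + v1) with hv | hv
  · have e0 : v0 = 0 := by linarith
    have e1 : v1 = 0 := by linarith
    rw [e0, e1]
    have : (0:ℝ) ≤ 2 * (((u0 ^ p + u1 ^ p)/2) ^ (1/p)) * (((0:ℝ) ^ p + (0:ℝ) ^ p)/2) ^ (1/p) := by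
      positivity
    simpa using this
  set c := (u0 + u1)/2 with hc
  set d := (v0 + v1)/2 with hd
  set s := (u0 - u1)/(u0 + u1) with hs
  set r := (v0 - v1)/(v0 + v1) with hr
  clear_value c d s r
  have hcpos : 0 < c := by rw [hc]; linarith
  have hdpos : 0 < d := by rw [hd]; linarith
  have hs1 : |s| ≤ 1 := by
    rw [abs_le, hs]
    constructor
    · rw [le_div_iff₀ hu]; linarith
    · rw [div_le_iff₀ hu]; linarith
  have hr1 : |r| ≤ 1 := by
    rw [abs_le, hr]
    constructor
    · rw [le_div_iff₀ hv]; linarith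
    · rw [div_le_iff₀ hv]; linarith
  have hu0' : u0 = c * (1 + s) := by rw [hc, hs]; field_simp; ring
  have hu1' : u1 = c * (1 - s) := by rw [hc, hs]; field_simp; ring
  have hv0' : v0 = d * (1 + r) := by rw [hd, hr]; field_simp; ring
  have hv1' : v1 = d * (1 - r) := by rw [hd, hr]; field_simp; ring
  have h1s : (0:ℝ) ≤ 1 + s := by linarith [(abs_le.mp hs1).1]
  have h1s' : (0:ℝ) ≤ 1 - s := by linarith [(abs_le.mp hs1).2]
  have h1r : (0:ℝ) ≤ 1 + r := by linarith [(abs_le.mp hr1).1]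
  have h1r' : (0:ℝ) ≤ 1 - r := by linarith [(abs_le.mp hr1).2]
  -- RHS simplification
  have hru : ((u0 ^ p + u1 ^ p)/2) ^ (1/p) = c * (((1+s) ^ p + (1-s) ^ p)/2) ^ (1/p) := by
    rw [hu0', hu1', Real.mul_rpow hcpos.le h1s, Real.mul_rpow hcpos.le h1s',
      show c ^ p * (1+s) ^ p + c ^ p * (1-s) ^ p = c ^ p * (((1+s) ^ p + (1-s) ^ p)) by ring]
    rw [mul_div_assoc, Real.mul_rpow (by positivity) (by positivity),
      ← Real.rpow_mul hcpos.le, mul_one_div, div_self hp0.ne', Real.rpow_one]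
  have hrv : ((v0 ^ p + v1 ^ p)/2) ^ (1/p) = d * (((1+r) ^ p + (1-r) ^ p)/2) ^ (1/p) := by
    rw [hv0', hv1', Real.mul_rpow hdpos.le h1r, Real.mul_rpow hdpos.le h1r',
      show d ^ p * (1+r) ^ p + d ^ p * (1-r) ^ p = d ^ p * (((1+r) ^ p + (1-r) ^ p)) by ring]
    rw [mul_div_assoc, Real.mul_rpow (by positivity) (by positivity),
      ← Real.rpow_mul hdpos.le, mul_one_div, div_self hp0.ne', Real.rpow_one]
  have hcore : 1 + ρ * s * r ≤ (((1+s) ^ p + (1-s) ^ p)/2) ^ (1/p) * (((1+r) ^ p + (1-r) ^ p)/2) ^ (1/p) := by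
    have := lemCore hp1 hp2 hs1 hr1
    rw [show p - 1 = ρ by rw [hp]; ring] at this
    exact this
  have hLHS : (1+ρ)/2*(u0*v0+u1*v1) + (1-ρ)/2*(u0*v1+u1*v0) = 2*c*d*(1 + ρ * s * r) := by
    rw [hu0', hu1', hv0', hv1']; ring
  rw [hLHS, hru, hrv]
  have h2cd : (0:ℝ) ≤ 2*c*d := by positivity
  calc 2*c*d*(1 + ρ * s * r)
      ≤ 2*c*d*((((1+s) ^ p + (1-s) ^ p)/2) ^ (1/p) * (((1+r) ^ p + (1-r) ^ p)/2) ^ (1/p)) :=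
        mul_le_mul_of_nonneg_left hcore h2cd
    _ = 2 * (c * (((1+s) ^ p + (1-s) ^ p)/2) ^ (1/p)) * (d * (((1+r) ^ p + (1-r) ^ p)/2) ^ (1/p)) := by
        ring

-- main induction: two-function hypercontractivity on the hypercube
lemma Pmain {ρ : ℝ} (h0 : 0 ≤ ρ) (h1 : ρ ≤ 1) :
    ∀ (n : ℕ) (f g : (Fin n → Bool) → ℝ), (∀ x, 0 ≤ f x) → (∀ x, 0 ≤ g x) →
    (∑ x : Fin n → Bool, ∑ y : Fin n → Bool, f x * g y *
        ∏ i, (if x i = y i then (1+ρ)/2 else (1-ρ)/2))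
      ≤ (2:ℝ)^n * ((∑ x : Fin n → Bool, f x ^ (1+ρ)) / 2^n) ^ (1/(1+ρ))
             * ((∑ y : Fin n → Bool, g y ^ (1+ρ)) / 2^n) ^ (1/(1+ρ)) := by
  have hp0 : (0:ℝ) < 1+ρ := by linarith
  intro n
  induction n with
  | zero =>
    intro f g hf hg
    have hrp : ∀ z : ℝ, 0 ≤ z → (z ^ (1+ρ)) ^ (1/(1+ρ)) = z := by
      intro z hz
      rw [← Real.rpow_mul hz, mul_one_div, div_self hp0.ne', Real.rpow_one]
    simp only [Fintype.sum_unique, pow_zero, div_one, one_mul]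
    rw [hrp _ (hf _), hrp _ (hg _)]
    simp
  | succ n ih =>
    intro f g hf hg
    have key : ∀ (F : (Fin (n+1) → Bool) → ℝ), (∑ x : Fin (n+1) → Bool, F x)
        = ∑ b : Bool, ∑ x' : Fin n → Bool, F (Fin.cons b x') := by
      intro F
      rw [← Equiv.sum_comp (Fin.consEquiv fun _ => Bool) F, Fintype.sum_prod_type]
      rfl
    obtain ⟨w, hw⟩ : ∃ w : Bool → Bool → ℝ,
        w = fun b c => if b = c then (1+ρ)/2 else (1-ρ)/2 := ⟨_, rfl⟩
    have hwnn : ∀ b c, 0 ≤ w b c := by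
      intro b c; rw [hw]; dsimp only; split <;> linarith
    obtain ⟨Q, hQdef⟩ : ∃ Q : Bool → Bool → ℝ,
        Q = fun b c => ∑ x' : Fin n → Bool, ∑ y' : Fin n → Bool,
          f (Fin.cons b x') * g (Fin.cons c y') *
            ∏ i, (if x' i = y' i then (1+ρ)/2 else (1-ρ)/2) := ⟨_, rfl⟩
    have hsplit : (∑ x : Fin (n+1) → Bool, ∑ y : Fin (n+1) → Bool, f x * g y *
          ∏ i, (if x i = y i then (1+ρ)/2 else (1-ρ)/2))
        = ∑ b : Bool, ∑ c : Bool, w b c * Q b c := by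
      rw [key]
      apply Finset.sum_congr rfl
      intro b _
      have hstep : ∀ x' : Fin n → Bool, (∑ y : Fin (n+1) → Bool, f (Fin.cons b x') * g y *
           ∏ i, (if (Fin.cons b x' : Fin (n+1) → Bool) i = y i then (1+ρ)/2 else (1-ρ)/2))
          = ∑ c : Bool, ∑ y' : Fin n → Bool, w b c * (f (Fin.cons b x') * g (Fin.cons c y') *
              ∏ i : Fin n, (if x' i = y' i then (1+ρ)/2 else (1-ρ)/2)) := by
        intro x'
        rw [key]
        apply Finset.sum_congr rfl
        intro c _
        apply Finset.sum_congr rfl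
        intro y' _
        rw [Fin.prod_univ_succ]
        simp only [Fin.cons_zero, Fin.cons_succ]
        rw [hw]; dsimp only; ring
      calc (∑ x' : Fin n → Bool, ∑ y : Fin (n+1) → Bool, f (Fin.cons b x') * g y *
              ∏ i, (if (Fin.cons b x' : Fin (n+1) → Bool) i = y i then (1+ρ)/2 else (1-ρ)/2))
          = ∑ x' : Fin n → Bool, ∑ c : Bool, ∑ y' : Fin n → Bool,
              w b c * (f (Fin.cons b x') * g (Fin.cons c y') *
                ∏ i : Fin n, (if x' i = y' i then (1+ρ)/2 else (1-ρ)/2)) :=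
            Finset.sum_congr rfl (fun x' _ => hstep x')
        _ = ∑ c : Bool, ∑ x' : Fin n → Bool, ∑ y' : Fin n → Bool,
              w b c * (f (Fin.cons b x') * g (Fin.cons c y') *
                ∏ i : Fin n, (if x' i = y' i then (1+ρ)/2 else (1-ρ)/2)) := Finset.sum_comm
        _ = ∑ c : Bool, w b c * Q b c := by
            apply Finset.sum_congr rfl
            intro c _
            rw [hQdef]
            dsimp only
            rw [Finset.mul_sum]
            apply Finset.sum_congr rfl
            intro x' _
            rw [Finset.mul_sum]
    obtain ⟨u, hu⟩ : ∃ u : Bool → ℝ,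
        u = fun b => ((∑ x' : Fin n → Bool, f (Fin.cons b x') ^ (1+ρ))/2^n) ^ (1/(1+ρ)) :=
      ⟨_, rfl⟩
    obtain ⟨v, hv⟩ : ∃ v : Bool → ℝ,
        v = fun c => ((∑ y' : Fin n → Bool, g (Fin.cons c y') ^ (1+ρ))/2^n) ^ (1/(1+ρ)) :=
      ⟨_, rfl⟩
    have hSnn : ∀ (h : (Fin n → Bool) → ℝ), (∀ z, 0 ≤ h z) →
        0 ≤ (∑ x' : Fin n → Bool, h x' ^ (1+ρ))/2^n := by
      intro h hh
      apply div_nonneg _ (by positivity)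
      exact Finset.sum_nonneg fun x _ => Real.rpow_nonneg (hh x) _
    have hunn : ∀ b, 0 ≤ u b := by
      intro b; rw [hu]; exact Real.rpow_nonneg (hSnn _ fun z => hf _) _
    have hvnn : ∀ c, 0 ≤ v c := by
      intro c; rw [hv]; exact Real.rpow_nonneg (hSnn _ fun z => hg _) _
    have hup : ∀ b, u b ^ (1+ρ) = (∑ x' : Fin n → Bool, f (Fin.cons b x') ^ (1+ρ))/2^n := by
      intro b
      rw [hu]; dsimp only
      rw [← Real.rpow_mul (hSnn _ fun z => hf _),
        show (1/(1+ρ))*(1+ρ) = 1 by field_simp, Real.rpow_one]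
    have hvp : ∀ c, v c ^ (1+ρ) = (∑ y' : Fin n → Bool, g (Fin.cons c y') ^ (1+ρ))/2^n := by
      intro c
      rw [hv]; dsimp only
      rw [← Real.rpow_mul (hSnn _ fun z => hg _),
        show (1/(1+ρ))*(1+ρ) = 1 by field_simp, Real.rpow_one]
    have hQle : ∀ b c, Q b c ≤ (2:ℝ)^n * (u b * v c) := by
      intro b c
      rw [hQdef, hu, hv]; dsimp only
      refine le_trans (ih (fun x' => f (Fin.cons b x')) (fun y' => g (Fin.cons c y'))
        (fun _ => hf _) (fun _ => hg _)) ?_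
      rw [mul_assoc]
    -- combine
    rw [hsplit]
    have step1 : (∑ b : Bool, ∑ c : Bool, w b c * Q b c)
        ≤ ∑ b : Bool, ∑ c : Bool, w b c * ((2:ℝ)^n * (u b * v c)) := by
      apply Finset.sum_le_sum
      intro b _
      apply Finset.sum_le_sum
      intro c _
      exact mul_le_mul_of_nonneg_left (hQle b c) (hwnn b c)
    apply le_trans step1
    have step2 : (∑ b : Bool, ∑ c : Bool, w b c * ((2:ℝ)^n * (u b * v c)))
        = (2:ℝ)^n * ((1+ρ)/2*(u false * v false + u true * v true)
            + (1-ρ)/2*(u false * v true + u true * v false)) := by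
      simp only [Fintype.sum_bool]
      rw [hw]; dsimp only
      simp only [if_pos rfl]
      norm_num
      ring
    rw [step2]
    have hL1 := lemL1 h0 h1 (hunn false) (hunn true) (hvnn false) (hvnn true)
    have step3 : (2:ℝ)^n * ((1+ρ)/2*(u false * v false + u true * v true)
            + (1-ρ)/2*(u false * v true + u true * v false))
        ≤ (2:ℝ)^n * (2 * (((u false ^ (1+ρ) + u true ^ (1+ρ))/2) ^ (1/(1+ρ)))
            * (((v false ^ (1+ρ) + v true ^ (1+ρ))/2) ^ (1/(1+ρ)))) := by
      apply mul_le_mul_of_nonneg_left _ (by positivity)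
      calc _ ≤ _ := hL1
        _ = _ := by ring
    apply le_trans step3
    -- now rewrite to the target form
    have hfs : (u false ^ (1+ρ) + u true ^ (1+ρ))/2
        = (∑ x : Fin (n+1) → Bool, f x ^ (1+ρ)) / 2^(n+1) := by
      rw [hup, hup, key (fun x => f x ^ (1+ρ))]
      simp only [Fintype.sum_bool]
      rw [pow_succ]
      field_simp
      ring
    have hgs : (v false ^ (1+ρ) + v true ^ (1+ρ))/2
        = (∑ y : Fin (n+1) → Bool, g y ^ (1+ρ)) / 2^(n+1) := by
      rw [hvp, hvp, key (fun y => g y ^ (1+ρ))]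
      simp only [Fintype.sum_bool]
      rw [pow_succ]
      field_simp
      ring
    rw [hfs, hgs, pow_succ]
    ring_nf
    exact le_refl _

lemma Qset {ρ : ℝ} (h0 : 0 ≤ ρ) (h1 : ρ ≤ 1) (n : ℕ) (A B : Finset (Fin n → Bool)) :
    (∑ x ∈ A, ∑ y ∈ B, ∏ i, (if x i = y i then (1+ρ)/2 else (1-ρ)/2))
      ≤ (2:ℝ)^n * ((A.card : ℝ)/2^n) ^ (1/(1+ρ)) * ((B.card : ℝ)/2^n) ^ (1/(1+ρ)) := by
  have hp0 : (0:ℝ) < 1+ρ := by linarith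
  have h := Pmain h0 h1 n (fun x => if x ∈ A then 1 else 0) (fun y => if y ∈ B then 1 else 0)
    (by intro x; split <;> norm_num) (by intro y; split <;> norm_num)
  have inner : ∀ x : Fin n → Bool, (∑ y : Fin n → Bool,
        (if x ∈ A then (1:ℝ) else 0) * (if y ∈ B then (1:ℝ) else 0) *
          ∏ i, (if x i = y i then (1+ρ)/2 else (1-ρ)/2))
      = if x ∈ A then ∑ y ∈ B, ∏ i, (if x i = y i then (1+ρ)/2 else (1-ρ)/2) else 0 := by
    intro x
    by_cases hx : x ∈ A
    · simp only [hx, if_true, one_mul, ite_mul, zero_mul, Finset.sum_ite_mem,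
        Finset.univ_inter]
    · simp [hx]
  have e1 : (∑ x : Fin n → Bool, ∑ y : Fin n → Bool,
        (if x ∈ A then (1:ℝ) else 0) * (if y ∈ B then (1:ℝ) else 0) *
        ∏ i, (if x i = y i then (1+ρ)/2 else (1-ρ)/2))
      = ∑ x ∈ A, ∑ y ∈ B, ∏ i, (if x i = y i then (1+ρ)/2 else (1-ρ)/2) := by
    rw [Finset.sum_congr rfl (fun x _ => inner x)]
    simp only [Finset.sum_ite_mem, Finset.univ_inter]
  have ecard : ∀ (C : Finset (Fin n → Bool)),
      (∑ x : Fin n → Bool, (if x ∈ C then (1:ℝ) else 0) ^ (1+ρ)) = C.card := by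
    intro C
    have hterm : ∀ x : Fin n → Bool, ((if x ∈ C then (1:ℝ) else 0)) ^ (1+ρ)
        = if x ∈ C then (1:ℝ) else 0 := by
      intro x; split
      · exact Real.one_rpow _
      · exact Real.zero_rpow hp0.ne'
    rw [Finset.sum_congr rfl (fun x _ => hterm x)]
    simp [Finset.sum_ite_mem, Finset.univ_inter]
  simp only [e1, ecard] at h
  exact h


/-- Small-set expansion of the ρ-noisy hypercube. Let `A ⊆ {0,1}^n` with
`|A| = α·2^n`, `α ∈ [0,1]`, and `ρ ∈ [−1,1]`. Sampling `x` uniformly and `y ~ N_ρ(x)`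
(independently in each coordinate, `y_i = x_i` with probability `(1+ρ)/2` and `y_i = ¬x_i`
with probability `(1−ρ)/2`), we have `Pr[x ∈ A ∧ y ∈ A] ≤ α^{2/(1+|ρ|)}`. The probability is
written out as the explicit weighted sum over pairs of points of `A`. -/
theorem stmt11 (n : ℕ) (hn : 1 ≤ n) (ρ : ℝ) (hρ : ρ ∈ Set.Icc (-1 : ℝ) 1)
    (A : Finset (Fin n → Bool)) (α : ℝ) (hα : α ∈ Set.Icc (0 : ℝ) 1)
    (hcard : (A.card : ℝ) = α * 2 ^ n) :
    (∑ x ∈ A, ∑ y ∈ A, ∏ i : Fin n,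
        (if x i = y i then (1 + ρ) / 2 else (1 - ρ) / 2)) / 2 ^ n
      ≤ α ^ ((2 : ℝ) / (1 + |ρ|)) := by
  obtain ⟨hρ1, hρ2⟩ := hρ
  obtain ⟨hα0, hα1⟩ := hα
  have h2n : (0:ℝ) < 2^n := by positivity
  have hαcard : ((A.card : ℝ))/2^n = α := by rw [hcard]; field_simp
  have hrsplit : ∀ r : ℝ, 0 ≤ r → r ≤ 1 →
      α ^ ((1:ℝ)/(1+r)) * α ^ ((1:ℝ)/(1+r)) = α ^ ((2:ℝ)/(1+r)) := by
    intro r hr0 hr1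
    have hp0 : (0:ℝ) < 1 + r := by linarith
    rw [← Real.rpow_add' hα0 (by positivity)]
    norm_num
    ring_nf
  rcases le_or_gt 0 ρ with hpos | hneg
  · rw [abs_of_nonneg hpos]
    have hQ := Qset hpos hρ2 n A A
    rw [hαcard] at hQ
    rw [div_le_iff₀ h2n]
    calc (∑ x ∈ A, ∑ y ∈ A, ∏ i : Fin n,
            (if x i = y i then (1 + ρ) / 2 else (1 - ρ) / 2))
        ≤ (2:ℝ)^n * α ^ ((1:ℝ)/(1+ρ)) * α ^ ((1:ℝ)/(1+ρ)) := hQ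
      _ = α ^ ((2:ℝ)/(1+ρ)) * 2^n := by rw [mul_assoc, hrsplit ρ hpos hρ2]; ring
  · rw [abs_of_neg hneg]
    have h0' : (0:ℝ) ≤ -ρ := by linarith
    have h1' : -ρ ≤ 1 := by linarith
    -- negate coordinates of the second copy
    obtain ⟨N, hN⟩ : ∃ N : (Fin n → Bool) → (Fin n → Bool), N = fun y i => !(y i) := ⟨_, rfl⟩
    have hNinj : Function.Injective N := by
      intro a b h
      funext i
      have := congrFun h i
      rw [hN] at this
      simpa using this
    have hBcard : ((A.image N).card : ℝ) = A.card := by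
      rw [Finset.card_image_of_injective _ hNinj]
    have hinner : ∀ x : Fin n → Bool, (∑ y ∈ A, ∏ i : Fin n,
          (if x i = y i then (1 + ρ) / 2 else (1 - ρ) / 2))
        = ∑ z ∈ A.image N, ∏ i : Fin n,
          (if x i = z i then (1 + -ρ) / 2 else (1 - -ρ) / 2) := by
      intro x
      rw [Finset.sum_image (fun y _ y' _ h => hNinj h)]
      apply Finset.sum_congr rfl
      intro y _
      apply Finset.prod_congr rfl
      intro i _
      rw [hN]
      dsimp only
      cases hxy : x i <;> rcases Bool.eq_false_or_eq_true (y i) with hyy | hyy <;> simp [hyy] <;> ring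
    rw [Finset.sum_congr rfl (fun x _ => hinner x)]
    have hQ := Qset h0' h1' n A (A.image N)
    rw [hBcard, hαcard] at hQ
    rw [div_le_iff₀ h2n]
    calc (∑ x ∈ A, ∑ z ∈ A.image N, ∏ i : Fin n,
            (if x i = z i then (1 + -ρ) / 2 else (1 - -ρ) / 2))
        ≤ (2:ℝ)^n * α ^ ((1:ℝ)/(1+-ρ)) * α ^ ((1:ℝ)/(1+-ρ)) := hQ
      _ = α ^ ((2:ℝ)/(1+-ρ)) * 2^n := by rw [mul_assoc, hrsplit (-ρ) h0' h1']; ring
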